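/- Preservation of the Dwork–Frobenius congruences under the cyclotomic Frobenius: Let R be a commutative ring and d, m positive integers. Assume that for every prime p dividing m there is a ring homomorphism φ_p : R → R/p^{v_p(m)}R with φ_p(x) ≡ x^p modulo pR, extended coefficientwise to polynomial rings. Let (c̃_e(q))_{e|m} be a family of polynomials in R[q] such that for every prime p and every integer e ≥ 1 with pe | m, c̃_e(q) ≡ φ_p(c̃_{pe}(q)) in (R/p^{v_p(m/e)}R)[q]. For every divisor e of dm with d | e set c̃'_e(q) := c̃_{e/d}(q^d). Then for every prime p dividing m and every integer e ≥ 1 with d | e and pe | dm, one has c̃'_e(q) ≡ φ_p(c̃'_{pe}(q)) in (R/p^{v_p(dm/e)}R)[q]. -/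

import Mathlib

open Polynomial

/-- The canonical projection `R/p^a R → R/p^b R` for `b ≤ a`. -/
def padicProj {R : Type*} [CommRing R] (p : R) {a b : ℕ} (h : b ≤ a) :
    R ⧸ Ideal.span {p ^ a} →+* R ⧸ Ideal.span {p ^ b} :=
  Ideal.Quotient.factor (Ideal.span_singleton_le_span_singleton.mpr (pow_dvd_pow p h))

/-- Monotonicity of `p`-adic valuations along divisibility. -/
theorem factorization_le_of_dvd_aux {a b : ℕ} (hb : b ≠ 0) (h : a ∣ b) (p : ℕ) :
    a.factorization p ≤ b.factorization p := by
  rcases eq_or_ne a 0 with rfl | ha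
  · exact absurd (zero_dvd_iff.mp h) hb
  · exact (Nat.factorization_le_iff_dvd ha hb).mpr h p

/-- With `d ∣ e` and `pe ∣ dm`, one has `dm/e ∣ m`. -/
theorem dvd_aux {d m p e : ℕ} (hd : 0 < d) (hde : d ∣ e) (hpe : p * e ∣ d * m) :
    d * m / e ∣ m := by
  obtain ⟨k, rfl⟩ := hde
  rw [Nat.mul_div_mul_left m k hd]
  exact Nat.div_dvd_of_dvd ((Nat.mul_dvd_mul_iff_left hd).mp ((dvd_mul_left (d * k) p).trans hpe))

/-- Preservation of the Dwork–Frobenius congruences under the cyclotomic Frobenius: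
if the family `(c̃_e(q))_{e ∣ m}` satisfies `c̃_e(q) ≡ φ_p(c̃_{pe}(q))` in
`(R/p^{v_p(m/e)}R)[q]` whenever `pe ∣ m`, then the family `c̃'_e(q) := c̃_{e/d}(q^d)`,
for `d ∣ e ∣ dm`, satisfies `c̃'_e(q) ≡ φ_p(c̃'_{pe}(q))` in `(R/p^{v_p(dm/e)}R)[q]`
whenever `p ∣ m`, `d ∣ e` and `pe ∣ dm`. -/
theorem cyclotomicFrobenius_preserves_dwork_congruences {R : Type*} [CommRing R]
    (d m : ℕ) (hd : 0 < d) (hm : 0 < m)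
    (φ : ∀ p : ℕ, p.Prime → p ∣ m → R →+* R ⧸ Ideal.span {(p : R) ^ m.factorization p})
    (hφ : ∀ (p : ℕ) (hp : p.Prime) (hpm : p ∣ m) (x : R),
      padicProj (p : R) (by exact hp.factorization_pos_of_dvd hm.ne' hpm)
          (φ p hp hpm x) =
        Ideal.Quotient.mk (Ideal.span {(p : R) ^ 1}) (x ^ p))
    (c : ℕ → Polynomial R)
    (hc : ∀ (p : ℕ) (hp : p.Prime) (e : ℕ) (he : 1 ≤ e) (hpe : p * e ∣ m),
      (c e).map (Ideal.Quotient.mk (Ideal.span {(p : R) ^ (m / e).factorization p})) =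
        (c (p * e)).map
          ((padicProj (p : R)
              (factorization_le_of_dvd_aux hm.ne'
                (Nat.div_dvd_of_dvd ((dvd_mul_left e p).trans hpe)) p)).comp
            (φ p hp ((dvd_mul_right p e).trans hpe))))
    (c' : ℕ → Polynomial R)
    (hc' : ∀ e : ℕ, c' e = Polynomial.expand R d (c (e / d))) :
    ∀ (p : ℕ) (hp : p.Prime) (hpm : p ∣ m) (e : ℕ) (he : 1 ≤ e) (hde : d ∣ e)
      (hpe : p * e ∣ d * m),
      (c' e).map
          (Ideal.Quotient.mk (Ideal.span {(p : R) ^ (d * m / e).factorization p})) =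
        (c' (p * e)).map
          ((padicProj (p : R)
              (factorization_le_of_dvd_aux hm.ne' (dvd_aux hd hde hpe) p)).comp
            (φ p hp hpm)) := by
  intro p hp hpm e he hde hpe
  obtain ⟨k, rfl⟩ := hde
  have hk : 1 ≤ k := by
    rcases Nat.eq_zero_or_pos k with rfl | h
    · simp at he
    · exact h
  have hpk : p * k ∣ m := by
    refine (Nat.mul_dvd_mul_iff_left hd).mp ?_
    have : d * (p * k) = p * (d * k) := by ring
    rw [this]; exact hpe
  have h1 : d * k / d = k := Nat.mul_div_cancel_left k hd
  have h2 : p * (d * k) / d = p * k := by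
    rw [show p * (d * k) = d * (p * k) by ring, Nat.mul_div_cancel_left _ hd]
  have h3 : d * m / (d * k) = m / k := Nat.mul_div_mul_left m k hd
  rw [hc' (d * k), hc' (p * (d * k)), h1, h2]
  have key := hc p hp k hk hpk
  simp only [Polynomial.map_expand]
  have h4 : (d * m / (d * k)).factorization p = (m / k).factorization p := by rw [h3]
  have key2 := congrArg (Polynomial.map (padicProj (p : R) h4.le)) key
  rw [Polynomial.map_map, Polynomial.map_map] at key2
  have e1 : (padicProj (p : R) h4.le).comp
      (Ideal.Quotient.mk (Ideal.span {(p : R) ^ (m / k).factorization p})) =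
      Ideal.Quotient.mk (Ideal.span {(p : R) ^ (d * m / (d * k)).factorization p}) := by
    ext x
    simp [padicProj, Ideal.Quotient.factor_mk]
  have e2 : (padicProj (p : R) h4.le).comp
      (padicProj (p : R) (factorization_le_of_dvd_aux hm.ne'
        (Nat.div_dvd_of_dvd ((dvd_mul_left k p).trans hpk)) p)) =
      padicProj (p : R) (factorization_le_of_dvd_aux hm.ne'
        (dvd_aux hd (Dvd.intro k rfl) hpe) p) := by
    refine RingHom.ext fun x => ?_
    obtain ⟨y, rfl⟩ := Ideal.Quotient.mk_surjective x
    simp [padicProj, Ideal.Quotient.factor_mk]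
  rw [e1, ← RingHom.comp_assoc, e2] at key2
  rw [key2]
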